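/- Let η be a finite Borel measure on ℝ such that for every Borel set A ⊆ ℝ with η(A) > 0 it holds ∫_{0}^{∞} η(A + t) dt > 0, where A + t := {a + t : a ∈ A}. Then η is absolutely continuous with respect to the 1-dimensional Lebesgue measure. -/
import Mathlib


open Set MeasureTheory

theorem stmt14 (η : Measure ℝ) [IsFiniteMeasure η]
    (h : ∀ A : Set ℝ, MeasurableSet A → 0 < η A →
      0 < ∫⁻ t in Set.Ioi (0:ℝ), η ((fun a => a + t) '' A)) :
    η ≪ (volume : Measure ℝ) := by
  refine Measure.AbsolutelyContinuous.mk (fun A hA hvol => ?_)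
  by_contra hne
  have hpos : 0 < η A := pos_iff_ne_zero.mpr hne
  have heq : ∀ t : ℝ, η ((fun a => a + t) '' A) = ∫⁻ x, A.indicator 1 (x - t) ∂η := by
    intro t
    have himg : (fun a => a + t) '' A = (fun x => x - t) ⁻¹' A := by
      ext x
      constructor
      · rintro ⟨a, ha, rfl⟩; simpa using ha
      · intro hx; exact ⟨x - t, hx, by ring⟩
    rw [himg, ← lintegral_indicator_one (hA.preimage (measurable_sub_const t))]
    exact lintegral_congr fun a => rfl
  have hmeas : AEMeasurable (Function.uncurry fun (t x : ℝ) => A.indicator (1 : ℝ → ENNReal) (x - t))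
      ((volume : Measure ℝ).prod η) :=
    ((measurable_const.indicator hA).comp (measurable_snd.sub measurable_fst)).aemeasurable
  have h0 : ∫⁻ t, η ((fun a => a + t) '' A) = 0 := by
    calc ∫⁻ t, η ((fun a => a + t) '' A)
        = ∫⁻ t, ∫⁻ x, A.indicator 1 (x - t) ∂η := by simp only [heq]
      _ = ∫⁻ x, (∫⁻ t, A.indicator 1 (x - t)) ∂η := lintegral_lintegral_swap hmeas
      _ = ∫⁻ x, volume A ∂η := by
          refine lintegral_congr fun x => ?_
          have hp : MeasurePreserving (fun t : ℝ => x - t) volume volume :=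
            Measure.measurePreserving_sub_left volume x
          exact (hp.lintegral_comp (measurable_const.indicator hA)).trans
            (lintegral_indicator_one hA)
      _ = 0 := by simp [hvol]
  have hle : ∫⁻ t in Set.Ioi (0:ℝ), η ((fun a => a + t) '' A) ≤
      ∫⁻ t, η ((fun a => a + t) '' A) := setLIntegral_le_lintegral _ _
  have := h A hA hpos
  rw [h0] at hle
  exact absurd (lt_of_lt_of_le this hle) (lt_irrefl 0)
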